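/- Let r₂ = (w⁽¹⁾)² − (9/4)ℓ⁽⁰⁾(ℓ⁽¹⁾)² ∈ P. Then r₂ does not lie in the ideal I generated by {f⁽ⁱ⁾ : i ≥ 0}, where f⁽ⁱ⁾ = Dⁱ((w⁽⁰⁾)² − (ℓ⁽⁰⁾)³). (In particular the image of r₂ in P/I is a nonzero nilpotent element.) -/

import Mathlib

open MvPolynomial

noncomputable section

/-- The polynomial ring `P = ℂ[ℓ⁽⁰⁾, ℓ⁽¹⁾, …, w⁽⁰⁾, w⁽¹⁾, …]`:
variables are indexed by `Fin 2 × ℕ`, where `(0, i)` is `ℓ⁽ⁱ⁾` and `(1, i)` is `w⁽ⁱ⁾`. -/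
abbrev P : Type := MvPolynomial (Fin 2 × ℕ) ℂ

/-- The unique ℂ-linear derivation `D : P → P` with `D(ℓ⁽ⁱ⁾) = ℓ⁽ⁱ⁺¹⁾`, `D(w⁽ⁱ⁾) = w⁽ⁱ⁺¹⁾`. -/
def D : Derivation ℂ P P :=
  MvPolynomial.mkDerivation ℂ (fun p : Fin 2 × ℕ => (X (p.1, p.2 + 1) : P))

/-- `ℓ⁽ⁱ⁾` -/
def lv (i : ℕ) : P := X (0, i)

/-- `w⁽ⁱ⁾` -/
def wv (i : ℕ) : P := X (1, i)

/-- `f = (w⁽⁰⁾)² − (ℓ⁽⁰⁾)³`. -/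
def f : P := wv 0 ^ 2 - lv 0 ^ 3

/-- `f⁽ⁱ⁾ = Dⁱ(f)`. -/
def fd (i : ℕ) : P := (⇑D)^[i] f

/-- The ideal `I` generated by all `f⁽ⁱ⁾`, `i ≥ 0`. -/
def I : Ideal P := Ideal.span (Set.range fd)

/-- `r₂ = (w⁽¹⁾)² − (9/4)ℓ⁽⁰⁾(ℓ⁽¹⁾)²`. -/
def r₂ : P := wv 1 ^ 2 - C ((9 : ℂ)/4) * lv 0 * lv 1 ^ 2

lemma D_X (v : Fin 2 × ℕ) : D (X v) = X (v.1, v.2 + 1) := mkDerivation_X ℂ _ v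

lemma fd1 : fd 1 = 2 * (X ((1:Fin 2),0) * X (1,1)) - 3 * (X ((0:Fin 2),0)^2 * X (0,1)) := by
  show D f = _
  simp [f, wv, lv, Derivation.leibniz, D_X]

lemma fd2 : fd 2 = 2*(X ((1:Fin 2),1)^2) + 2*(X ((1:Fin 2),0) * X (1,2))
    - (6*(X ((0:Fin 2),0) * X (0,1)^2) + 3*(X ((0:Fin 2),0)^2 * X (0,2))) := by
  have : fd 2 = D (fd 1) := by
    show (⇑D)^[2] f = _
    rw [Function.iterate_succ_apply', Function.iterate_one]; rfl
  rw [this, fd1]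
  have h2 : D (2:P) = 0 := by rw [show (2:P) = ((2:ℕ):P) by norm_num]; exact Derivation.map_natCast D 2
  have h3 : D (3:P) = 0 := by rw [show (3:P) = ((3:ℕ):P) by norm_num]; exact Derivation.map_natCast D 3
  simp [Derivation.leibniz, D_X, h2, h3]
  ring

/-- the weight function -/
def wt : Fin 2 × ℕ → ℕ := fun v => 2 + v.1.val + v.2

lemma wt_succ (v : Fin 2 × ℕ) : wt (v.1, v.2 + 1) = wt v + 1 := by simp [wt]; ring

lemma weight_sub_single {d : (Fin 2 × ℕ) →₀ ℕ} {v : Fin 2 × ℕ} (hv : v ∈ d.support) :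
    (Finsupp.weight wt) (d - Finsupp.single v 1) + wt v = (Finsupp.weight wt) d := by
  have : (d - Finsupp.single v 1) + Finsupp.single v 1 = d := by
    ext x
    simp only [Finsupp.coe_add, Finsupp.coe_tsub, Pi.add_apply, Pi.sub_apply]
    rcases eq_or_ne x v with rfl | hx
    · have := Finsupp.mem_support_iff.mp hv
      simp only [Finsupp.single_eq_same]; omega
    · simp [Finsupp.single_eq_of_ne' (Ne.symm hx)]
  conv_rhs => rw [← this]
  rw [map_add]
  congr 1
  rw [Finsupp.weight_apply, Finsupp.sum_single_index] <;> simp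

lemma D_homog {p : P} {n : ℕ} (hp : IsWeightedHomogeneous wt p n) :
    IsWeightedHomogeneous wt (D p) (n + 1) := by
  rw [← mem_weightedHomogeneousSubmodule] at *
  have hD : D p = ∑ d ∈ p.support, D (monomial d (coeff d p)) := by
    conv_lhs => rw [p.as_sum]
    rw [map_sum]
  rw [hD]
  apply Submodule.sum_mem
  intro d hd
  rw [show D (monomial d (coeff d p)) = _ from
    mkDerivation_monomial ℂ (fun v : Fin 2 × ℕ => (X (v.1, v.2 + 1) : P)) d (coeff d p)]
  apply Submodule.smul_mem
  apply Submodule.finsuppSum_mem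
  intro v hv0
  have hv : v ∈ d.support := Finsupp.mem_support_iff.mpr hv0
  rw [smul_eq_mul, mem_weightedHomogeneousSubmodule]
  have h1 : IsWeightedHomogeneous wt (monomial (d - Finsupp.single v 1) ((d v : ℂ))) ((Finsupp.weight wt) (d - Finsupp.single v 1)) :=
    isWeightedHomogeneous_monomial _ _ _ rfl
  have h2 := h1.mul (isWeightedHomogeneous_X ℂ wt (v.1, v.2 + 1))
  have h3 : (Finsupp.weight wt) (d - Finsupp.single v 1) + wt (v.1, v.2 + 1) = n + 1 := by
    rw [wt_succ, ← add_assoc, weight_sub_single hv, hp (Finsupp.mem_support_iff.mp hd)]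
  rwa [h3] at h2

lemma fd_homog (i : ℕ) : IsWeightedHomogeneous wt (fd i) (6 + i) := by
  induction i with
  | zero =>
    show IsWeightedHomogeneous wt f 6
    rw [← mem_weightedHomogeneousSubmodule]
    apply Submodule.sub_mem
    · rw [mem_weightedHomogeneousSubmodule]
      have := (isWeightedHomogeneous_X ℂ wt ((1:Fin 2),0)).mul (isWeightedHomogeneous_X ℂ wt ((1:Fin 2),0))
      rw [show wv 0 ^ 2 = X ((1:Fin 2),0) * X ((1:Fin 2),0) by rw [wv]; ring]
      exact this
    · rw [mem_weightedHomogeneousSubmodule]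
      have := ((isWeightedHomogeneous_X ℂ wt ((0:Fin 2),0)).mul (isWeightedHomogeneous_X ℂ wt ((0:Fin 2),0))).mul (isWeightedHomogeneous_X ℂ wt ((0:Fin 2),0))
      rw [show lv 0 ^ 3 = X ((0:Fin 2),0) * X ((0:Fin 2),0) * X ((0:Fin 2),0) by rw [lv]; ring]
      exact this
  | succ k ih =>
    have : fd (k+1) = D (fd k) := Function.iterate_succ_apply' (⇑D) k f
    rw [this, show 6 + (k+1) = (6+k) + 1 from rfl]
    exact D_homog ih

lemma wt_ne_zero (v : Fin 2 × ℕ) : wt v ≠ 0 := by simp [wt]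

lemma whc_mul_homog (g h : P) (n d : ℕ) (hh : IsWeightedHomogeneous wt h d) :
    weightedHomogeneousComponent wt (n + d) (g * h) =
      weightedHomogeneousComponent wt n g * h := by
  conv_lhs => rw [g.as_sum, Finset.sum_mul, map_sum]
  conv_rhs => rw [g.as_sum, map_sum, Finset.sum_mul]
  refine Finset.sum_congr rfl fun v hv => ?_
  by_cases hw : Finsupp.weight wt v = n
  · rw [((isWeightedHomogeneous_monomial wt v _ hw).mul hh).weightedHomogeneousComponent_same,
      (isWeightedHomogeneous_monomial wt v _ hw).weightedHomogeneousComponent_same]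
  · rw [((isWeightedHomogeneous_monomial wt v _ rfl).mul hh).weightedHomogeneousComponent_ne (n+d)
        (by omega),
      (isWeightedHomogeneous_monomial wt v _ rfl).weightedHomogeneousComponent_ne n (Ne.symm hw), zero_mul]

lemma whc_mul_homog_zero (g h : P) (n d : ℕ) (hh : IsWeightedHomogeneous wt h d) (hlt : n < d) :
    weightedHomogeneousComponent wt n (g * h) = 0 := by
  conv_lhs => rw [g.as_sum, Finset.sum_mul, map_sum]
  refine Finset.sum_eq_zero fun v hv => ?_
  exact ((isWeightedHomogeneous_monomial wt v _ rfl).mul hh).weightedHomogeneousComponent_ne n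
    (by omega)

lemma r2_homog : IsWeightedHomogeneous wt r₂ 8 := by
  rw [← mem_weightedHomogeneousSubmodule]
  apply Submodule.sub_mem
  · rw [mem_weightedHomogeneousSubmodule]
    have := (isWeightedHomogeneous_X ℂ wt ((1:Fin 2),1)).mul (isWeightedHomogeneous_X ℂ wt ((1:Fin 2),1))
    rw [show wv 1 ^ 2 = X ((1:Fin 2),1) * X ((1:Fin 2),1) by rw [wv]; ring]
    exact this
  · rw [mem_weightedHomogeneousSubmodule]
    have := (((isWeightedHomogeneous_C wt ((9:ℂ)/4)).mul
        (isWeightedHomogeneous_X ℂ wt ((0:Fin 2),0))).mul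
      ((isWeightedHomogeneous_X ℂ wt ((0:Fin 2),1)).mul (isWeightedHomogeneous_X ℂ wt ((0:Fin 2),1))))
    rw [show C ((9:ℂ)/4) * lv 0 * lv 1 ^ 2 = C ((9:ℂ)/4) * X ((0:Fin 2),0) * (X ((0:Fin 2),1) * X ((0:Fin 2),1)) by rw [lv, lv]; ring]
    exact this

def φ₁ : P →ₐ[ℂ] P := aeval (fun v : Fin 2 × ℕ => if v = (1,1) then (X v : P) else 0)
def φ₂ : P →ₐ[ℂ] P := aeval (fun v : Fin 2 × ℕ => if v = (1,0) ∨ v = (1,2) then (X v : P) else 0)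
def m₁ : (Fin 2 × ℕ) →₀ ℕ := Finsupp.single ((1:Fin 2),1) 2
def m₂ : (Fin 2 × ℕ) →₀ ℕ := Finsupp.single ((1:Fin 2),0) 1 + Finsupp.single ((1:Fin 2),2) 1

lemma φ₁_f : φ₁ (fd 0) = 0 := by
  show φ₁ f = 0
  simp (config := { decide := true }) [f, wv, lv, φ₁]

lemma φ₂_f : φ₂ (fd 0) = X ((1:Fin 2),0) ^ 2 := by
  show φ₂ f = _
  simp (config := { decide := true }) [f, wv, lv, φ₂]

lemma φ₁_fd1 : φ₁ (fd 1) = 0 := by simp (config := { decide := true }) [fd1, φ₁, map_ofNat]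
lemma φ₂_fd1 : φ₂ (fd 1) = 0 := by simp (config := { decide := true }) [fd1, φ₂, map_ofNat]
lemma φ₁_fd2 : φ₁ (fd 2) = C 2 * X ((1:Fin 2),1)^2 := by simp (config := { decide := true }) [fd2, φ₁, map_ofNat]
lemma φ₂_fd2 : φ₂ (fd 2) = C 2 * (X ((1:Fin 2),0) * X ((1:Fin 2),2)) := by simp (config := { decide := true }) [fd2, φ₂, map_ofNat]

lemma m2_sub : m₂ - Finsupp.single ((1:Fin 2),0) 1 = Finsupp.single ((1:Fin 2),2) 1 := by
  rw [m₂, add_tsub_cancel_left]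

lemma mem1 : ((1:Fin 2),(0:ℕ)) ∈ m₂.support := by
  rw [Finsupp.mem_support_iff]
  simp (config := { decide := true }) [m₂, Finsupp.single_apply]

lemma coeff_m2_mul_X2 (q : P) : coeff m₂ (q * X ((1:Fin 2),0) ^ 2) = 0 := by
  classical
  rw [pow_two, ← mul_assoc, coeff_mul_X', if_pos mem1, m2_sub, coeff_mul_X', if_neg]
  intro h
  rw [Finsupp.mem_support_iff] at h
  simp (config := { decide := true }) [Finsupp.single_apply] at h

lemma term_eq (i : ℕ) (q : P) :
    coeff m₁ (φ₁ (weightedHomogeneousComponent wt 8 (q * fd i))) =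
      coeff m₂ (φ₂ (weightedHomogeneousComponent wt 8 (q * fd i))) := by
  match i with
  | 0 =>
    rw [show (8:ℕ) = 2 + 6 from rfl, whc_mul_homog q (fd 0) 2 6 (fd_homog 0)]
    rw [map_mul, map_mul, φ₁_f, φ₂_f, mul_zero]
    rw [coeff_m2_mul_X2]
    simp only [mul_zero, map_zero, coeff_zero]
  | 1 =>
    rw [show (8:ℕ) = 1 + 7 from rfl, whc_mul_homog q (fd 1) 1 7 (fd_homog 1)]
    rw [map_mul, map_mul, φ₁_fd1, φ₂_fd1, mul_zero, mul_zero]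
    simp only [coeff_zero]
  | 2 =>
    rw [show (8:ℕ) = 0 + 8 from rfl, whc_mul_homog q (fd 2) 0 8 (fd_homog 2)]
    rw [weightedHomogeneousComponent_zero (w := wt) q wt_ne_zero]
    rw [map_mul, map_mul, φ₁_fd2, φ₂_fd2]
    have hC1 : φ₁ (C (coeff 0 q)) = C (coeff 0 q) := by simp [φ₁]
    have hC2 : φ₂ (C (coeff 0 q)) = C (coeff 0 q) := by simp [φ₂]
    rw [hC1, hC2]
    have hXX : (X ((1:Fin 2),0) : P) * X ((1:Fin 2),2) = monomial m₂ 1 := by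
      rw [X, X, monomial_mul, m₂, one_mul]
    rw [hXX]
    simp [coeff_C_mul, m₁, coeff_X_pow, coeff_monomial]

  | (k+3) =>
    rw [whc_mul_homog_zero q (fd (k+3)) 8 (6+(k+3)) (fd_homog (k+3)) (by omega)]
    simp only [map_zero, coeff_zero]

theorem r₂_not_mem : r₂ ∉ I := by
  intro hmem
  have hmem' : r₂ ∈ Submodule.span P (Set.range fd) := hmem
  obtain ⟨c, hc⟩ := Finsupp.mem_span_range_iff_exists_finsupp.mp hmem'
  have hsum : r₂ = ∑ i ∈ c.support, weightedHomogeneousComponent wt 8 (c i * fd i) := by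
    conv_lhs => rw [← r2_homog.weightedHomogeneousComponent_same, ← hc]
    rw [Finsupp.sum, map_sum]
    rfl
  have h1 : coeff m₁ (φ₁ r₂) = 1 := by
    simp (config := { decide := true }) [r₂, wv, lv, φ₁, m₁, coeff_X_pow]
  have h2 : coeff m₂ (φ₂ r₂) = 0 := by
    simp (config := { decide := true }) [r₂, wv, lv, φ₂, m₂]
  have : (1:ℂ) = 0 := by
    calc (1:ℂ) = coeff m₁ (φ₁ r₂) := h1.symm
    _ = ∑ i ∈ c.support, coeff m₁ (φ₁ (weightedHomogeneousComponent wt 8 (c i * fd i))) := by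
        rw [hsum]; rw [map_sum]; rw [coeff_sum]
    _ = ∑ i ∈ c.support, coeff m₂ (φ₂ (weightedHomogeneousComponent wt 8 (c i * fd i))) :=
        Finset.sum_congr rfl fun i _ => term_eq i (c i)
    _ = coeff m₂ (φ₂ r₂) := by rw [hsum]; rw [map_sum]; rw [coeff_sum]
    _ = 0 := h2
  norm_num at this
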